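/- The quotient ring Z[ω]/(δ³), where ω = e^{iπ/4} and δ = 1+ω, has exactly 8 elements, represented by 1, ω, ω², ω³, 0, 1+ω, 1+ω², 1+ω³. -/

import Mathlib

noncomputable section
open Complex

def ω : ℂ := Complex.exp (Real.pi * Complex.I / 4)

def δ : ℂ := 1 + ω

def inZω (x : ℂ) : Prop := ∃ a b c d : ℤ, x = a * ω^3 + b * ω^2 + c * ω + d

def inD (x : ℂ) : Prop := ∃ a : ℤ, ∃ n : ℕ, x = a / 2^n

def inDω (x : ℂ) : Prop :=
  ∃ a b c d : ℂ, inD a ∧ inD b ∧ inD c ∧ inD d ∧ x = a * ω^3 + b * ω^2 + c * ω + d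

def dvdZ (a b : ℂ) : Prop := ∃ t : ℂ, inZω t ∧ b = a * t

lemma omega_pow_four : ω ^ 4 = -1 := by
  rw [ω, ← Complex.exp_nat_mul,
    show ((4:ℕ):ℂ) * (↑Real.pi * Complex.I / 4) = ↑Real.pi * Complex.I by push_cast; ring,
    Complex.exp_pi_mul_I]

lemma omega_eq : ω = ((Real.sqrt 2 / 2 : ℝ) : ℂ) + ((Real.sqrt 2 / 2 : ℝ) : ℂ) * Complex.I := by
  rw [ω, show (Real.pi:ℂ) * Complex.I / 4 = ((Real.pi/4 : ℝ):ℂ) * Complex.I by push_cast; ring,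
    Complex.exp_mul_I, ← Complex.ofReal_cos, ← Complex.ofReal_sin,
    Real.cos_pi_div_four, Real.sin_pi_div_four]

lemma indep (a b c d : ℤ) (h : (a:ℂ)*ω^3 + b*ω^2 + c*ω + d = 0) :
    a = 0 ∧ b = 0 ∧ c = 0 ∧ d = 0 := by
  have hs : Irrational (Real.sqrt 2) := irrational_sqrt_two
  have hs2 : ((Real.sqrt 2:ℝ):ℂ)^2 = 2 := by
    rw [← Complex.ofReal_pow, Real.sq_sqrt (by norm_num : (0:ℝ) ≤ 2)]
    norm_num
  have hI : Complex.I ^ 2 = -1 := Complex.I_sq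
  rw [omega_eq] at h
  have h2 : ((((c:ℝ)-a)*(Real.sqrt 2/2)+d : ℝ) : ℂ)
      + ((((a:ℝ)+c)*(Real.sqrt 2/2)+b : ℝ) : ℂ) * Complex.I = 0 := by
    push_cast at h ⊢
    linear_combination h + (-(a:ℂ)*((Real.sqrt 2:ℝ):ℂ)^3/4
        - (a:ℂ)*((Real.sqrt 2:ℝ):ℂ)^3*(1+Complex.I)/8
        - (b:ℂ)*((Real.sqrt 2:ℝ):ℂ)^2/4)*hI
      + ((a:ℂ)*((Real.sqrt 2:ℝ):ℂ)/4 - (a:ℂ)*((Real.sqrt 2:ℝ):ℂ)*Complex.I/4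
         - (b:ℂ)*Complex.I/2)*hs2
  have hre : ((c:ℝ)-a)*(Real.sqrt 2/2)+d = 0 := by simpa using congrArg Complex.re h2
  have him : ((a:ℝ)+c)*(Real.sqrt 2/2)+b = 0 := by simpa using congrArg Complex.im h2
  have hca : c - a = 0 := by
    by_contra hne
    have h3 : ((c - a : ℤ) : ℝ) * Real.sqrt 2 = ((-2*d : ℤ) : ℝ) := by push_cast; linarith
    exact (Irrational.intCast_mul hs hne).ne_int _ h3
  have hac : a + c = 0 := by
    by_contra hne
    have h3 : ((a + c : ℤ) : ℝ) * Real.sqrt 2 = ((-2*b : ℤ) : ℝ) := by push_cast; linarith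
    exact (Irrational.intCast_mul hs hne).ne_int _ h3
  have hd : (d:ℝ) = 0 := by
    have hz : ((c:ℝ)-a) = 0 := by exact_mod_cast hca
    rw [hz] at hre; linarith
  have hb : (b:ℝ) = 0 := by
    have hz : ((a:ℝ)+c) = 0 := by exact_mod_cast hac
    rw [hz] at him; linarith
  have hd' : d = 0 := by exact_mod_cast hd
  have hb' : b = 0 := by exact_mod_cast hb
  refine ⟨by omega, hb', by omega, hd'⟩

lemma dvd_of (a b c d p q u v : ℤ) (x : ℂ)
    (h1 : p+3*q+3*u+v = a) (h2 : -p+q+3*u+3*v = b)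
    (h3 : -3*p-q+u+3*v = c) (h4 : -3*p-3*q-u+v = d)
    (hx : x = a*ω^3 + b*ω^2 + c*ω + d) : dvdZ (δ^3) x := by
  refine ⟨(p:ℂ)*ω^3 + (q:ℂ)*ω^2 + (u:ℂ)*ω + (v:ℂ), ⟨p, q, u, v, rfl⟩, ?_⟩
  have H1 : ((p:ℂ)+3*q+3*u+v) = (a:ℂ) := by exact_mod_cast h1
  have H2 : (-(p:ℂ)+q+3*u+3*v) = (b:ℂ) := by exact_mod_cast h2
  have H3 : (-3*(p:ℂ)-q+u+3*v) = (c:ℂ) := by exact_mod_cast h3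
  have H4 : (-3*(p:ℂ)-3*q-u+v) = (d:ℂ) := by exact_mod_cast h4
  rw [hx, show δ = 1 + ω from rfl]
  linear_combination (-(ω^3))*H1 - ω^2*H2 - ω*H3 - H4
    - ((p:ℂ)*ω^2+(3*(p:ℂ)+q)*ω+(3*(p:ℂ)+3*q+u))*omega_pow_four

lemma not_dvd_of (e f g h : ℤ) (x : ℂ)
    (hx : x = e*ω^3 + f*ω^2 + g*ω + h)
    (hodd : (e+f) % 2 = 1 ∨ (e+g) % 2 = 1 ∨ (e+f+g+h) % 2 = 1) :
    ¬ dvdZ (δ^3) x := by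
  rintro ⟨t, ⟨p, q, u, v, rfl⟩, heq⟩
  rw [hx, show δ = 1 + ω from rfl] at heq
  obtain ⟨h1, h2, h3, h4⟩ := indep (p+3*q+3*u+v-e) (-p+q+3*u+3*v-f) (-3*p-q+u+3*v-g) (-3*p-3*q-u+v-h)
    (by push_cast;
        linear_combination -heq - ((p:ℂ)*ω^2+(3*(p:ℂ)+q)*ω+(3*(p:ℂ)+3*q+u))*omega_pow_four)
  omega

theorem quotient_delta_cubed_eight_elements :
    (∀ x : ℂ, inZω x →
      ∃ r ∈ ([1, ω, ω^2, ω^3, 0, 1 + ω, 1 + ω^2, 1 + ω^3] : List ℂ),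
        dvdZ (δ^3) (x - r)) ∧
    ([1, ω, ω^2, ω^3, 0, 1 + ω, 1 + ω^2, 1 + ω^3] : List ℂ).Pairwise
      (fun r s => ¬ dvdZ (δ^3) (s - r)) := by
  constructor
  · rintro x ⟨a, b, c, d, rfl⟩
    obtain ⟨A, hA | hA⟩ := Int.even_or_odd' a <;>
      obtain ⟨B, hB | hB⟩ := Int.even_or_odd' b <;>
        obtain ⟨C, hC | hC⟩ := Int.even_or_odd' c <;>
          obtain ⟨D, hD | hD⟩ := Int.even_or_odd' d <;>
            subst hA hB hC hD
    · exact ⟨(0:ℂ), by norm_num,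
        dvd_of (2*A+0-(0)) (2*B+0-(0)) (2*C+0-(0)) (2*D+0-(0))
          (-2*A + 2*B - C - D) (A - 2*B + 2*C - D) (A + B - 2*C + 2*D) (-2*A + B + C - 2*D) _
          (by ring) (by ring) (by ring) (by ring) (by push_cast; ring)⟩
    · exact ⟨(1:ℂ), by norm_num,
        dvd_of (2*A+0-(0)) (2*B+0-(0)) (2*C+0-(0)) (2*D+1-(1))
          (-2*A + 2*B - C - D) (A - 2*B + 2*C - D) (A + B - 2*C + 2*D) (-2*A + B + C - 2*D) _
          (by ring) (by ring) (by ring) (by ring) (by push_cast; ring)⟩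
    · exact ⟨ω, by norm_num,
        dvd_of (2*A+0-(0)) (2*B+0-(0)) (2*C+1-(1)) (2*D+0-(0))
          (-2*A + 2*B - C - D) (A - 2*B + 2*C - D) (A + B - 2*C + 2*D) (-2*A + B + C - 2*D) _
          (by ring) (by ring) (by ring) (by ring) (by push_cast; ring)⟩
    · exact ⟨1+ω, by norm_num,
        dvd_of (2*A+0-(0)) (2*B+0-(0)) (2*C+1-(1)) (2*D+1-(1))
          (-2*A + 2*B - C - D) (A - 2*B + 2*C - D) (A + B - 2*C + 2*D) (-2*A + B + C - 2*D) _
          (by ring) (by ring) (by ring) (by ring) (by push_cast; ring)⟩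
    · exact ⟨ω^2, by norm_num,
        dvd_of (2*A+0-(0)) (2*B+1-(1)) (2*C+0-(0)) (2*D+0-(0))
          (-2*A + 2*B - C - D) (A - 2*B + 2*C - D) (A + B - 2*C + 2*D) (-2*A + B + C - 2*D) _
          (by ring) (by ring) (by ring) (by ring) (by push_cast; ring)⟩
    · exact ⟨1+ω^2, by norm_num,
        dvd_of (2*A+0-(0)) (2*B+1-(1)) (2*C+0-(0)) (2*D+1-(1))
          (-2*A + 2*B - C - D) (A - 2*B + 2*C - D) (A + B - 2*C + 2*D) (-2*A + B + C - 2*D) _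
          (by ring) (by ring) (by ring) (by ring) (by push_cast; ring)⟩
    · exact ⟨1+ω^3, by norm_num,
        dvd_of (2*A+0-(1)) (2*B+1-(0)) (2*C+1-(0)) (2*D+0-(1))
          (-2*A + 2*B - C - D + 2) (A - 2*B + 2*C - D) (A + B - 2*C + 2*D - 2) (-2*A + B + C - 2*D + 3) _
          (by ring) (by ring) (by ring) (by ring) (by push_cast; ring)⟩
    · exact ⟨ω^3, by norm_num,
        dvd_of (2*A+0-(1)) (2*B+1-(0)) (2*C+1-(0)) (2*D+1-(0))
          (-2*A + 2*B - C - D + 1) (A - 2*B + 2*C - D - 1) (A + B - 2*C + 2*D) (-2*A + B + C - 2*D + 1) _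
          (by ring) (by ring) (by ring) (by ring) (by push_cast; ring)⟩
    · exact ⟨ω^3, by norm_num,
        dvd_of (2*A+1-(1)) (2*B+0-(0)) (2*C+0-(0)) (2*D+0-(0))
          (-2*A + 2*B - C - D) (A - 2*B + 2*C - D) (A + B - 2*C + 2*D) (-2*A + B + C - 2*D) _
          (by ring) (by ring) (by ring) (by ring) (by push_cast; ring)⟩
    · exact ⟨1+ω^3, by norm_num,
        dvd_of (2*A+1-(1)) (2*B+0-(0)) (2*C+0-(0)) (2*D+1-(1))
          (-2*A + 2*B - C - D) (A - 2*B + 2*C - D) (A + B - 2*C + 2*D) (-2*A + B + C - 2*D) _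
          (by ring) (by ring) (by ring) (by ring) (by push_cast; ring)⟩
    · exact ⟨1+ω^2, by norm_num,
        dvd_of (2*A+1-(0)) (2*B+0-(1)) (2*C+1-(0)) (2*D+0-(1))
          (-2*A + 2*B - C - D - 2) (A - 2*B + 2*C - D + 3) (A + B - 2*C + 2*D - 2) (-2*A + B + C - 2*D) _
          (by ring) (by ring) (by ring) (by ring) (by push_cast; ring)⟩
    · exact ⟨ω^2, by norm_num,
        dvd_of (2*A+1-(0)) (2*B+0-(1)) (2*C+1-(0)) (2*D+1-(0))
          (-2*A + 2*B - C - D - 3) (A - 2*B + 2*C - D + 2) (A + B - 2*C + 2*D) (-2*A + B + C - 2*D - 2) _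
          (by ring) (by ring) (by ring) (by ring) (by push_cast; ring)⟩
    · exact ⟨1+ω, by norm_num,
        dvd_of (2*A+1-(0)) (2*B+1-(0)) (2*C+0-(1)) (2*D+0-(1))
          (-2*A + 2*B - C - D + 1) (A - 2*B + 2*C - D - 1) (A + B - 2*C + 2*D + 1) (-2*A + B + C - 2*D) _
          (by ring) (by ring) (by ring) (by ring) (by push_cast; ring)⟩
    · exact ⟨ω, by norm_num,
        dvd_of (2*A+1-(0)) (2*B+1-(0)) (2*C+0-(1)) (2*D+1-(0))
          (-2*A + 2*B - C - D) (A - 2*B + 2*C - D - 2) (A + B - 2*C + 2*D + 3) (-2*A + B + C - 2*D - 2) _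
          (by ring) (by ring) (by ring) (by ring) (by push_cast; ring)⟩
    · exact ⟨(1:ℂ), by norm_num,
        dvd_of (2*A+1-(0)) (2*B+1-(0)) (2*C+1-(0)) (2*D+0-(1))
          (-2*A + 2*B - C - D) (A - 2*B + 2*C - D + 1) (A + B - 2*C + 2*D - 1) (-2*A + B + C - 2*D + 1) _
          (by ring) (by ring) (by ring) (by ring) (by push_cast; ring)⟩
    · exact ⟨(0:ℂ), by norm_num,
        dvd_of (2*A+1-(0)) (2*B+1-(0)) (2*C+1-(0)) (2*D+1-(0))
          (-2*A + 2*B - C - D - 1) (A - 2*B + 2*C - D) (A + B - 2*C + 2*D + 1) (-2*A + B + C - 2*D - 1) _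
          (by ring) (by ring) (by ring) (by ring) (by push_cast; ring)⟩
  · simp only [List.pairwise_cons, List.mem_cons, List.not_mem_nil, or_false,
      forall_eq_or_imp, forall_eq, List.Pairwise.nil, and_true]
    refine ⟨⟨?_, ?_, ?_, ?_, ?_, ?_, ?_⟩, ⟨?_, ?_, ?_, ?_, ?_, ?_⟩, ⟨?_, ?_, ?_, ?_, ?_⟩, ⟨?_, ?_, ?_, ?_⟩, ⟨?_, ?_, ?_⟩, ⟨?_, ?_⟩, ?_, fun _ hF => hF.elim⟩
    · exact not_dvd_of 0 (0) (1) (-1) _ (by push_cast; ring) (by decide)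
    · exact not_dvd_of 0 (1) (0) (-1) _ (by push_cast; ring) (by decide)
    · exact not_dvd_of 1 (0) (0) (-1) _ (by push_cast; ring) (by decide)
    · exact not_dvd_of 0 (0) (0) (-1) _ (by push_cast; ring) (by decide)
    · exact not_dvd_of 0 (0) (1) (0) _ (by push_cast; ring) (by decide)
    · exact not_dvd_of 0 (1) (0) (0) _ (by push_cast; ring) (by decide)
    · exact not_dvd_of 1 (0) (0) (0) _ (by push_cast; ring) (by decide)
    · exact not_dvd_of 0 (1) (-1) (0) _ (by push_cast; ring) (by decide)
    · exact not_dvd_of 1 (0) (-1) (0) _ (by push_cast; ring) (by decide)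
    · exact not_dvd_of 0 (0) (-1) (0) _ (by push_cast; ring) (by decide)
    · exact not_dvd_of 0 (0) (0) (1) _ (by push_cast; ring) (by decide)
    · exact not_dvd_of 0 (1) (-1) (1) _ (by push_cast; ring) (by decide)
    · exact not_dvd_of 1 (0) (-1) (1) _ (by push_cast; ring) (by decide)
    · exact not_dvd_of 1 (-1) (0) (0) _ (by push_cast; ring) (by decide)
    · exact not_dvd_of 0 (-1) (0) (0) _ (by push_cast; ring) (by decide)
    · exact not_dvd_of 0 (-1) (1) (1) _ (by push_cast; ring) (by decide)
    · exact not_dvd_of 0 (0) (0) (1) _ (by push_cast; ring) (by decide)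
    · exact not_dvd_of 1 (-1) (0) (1) _ (by push_cast; ring) (by decide)
    · exact not_dvd_of (-1) (0) (0) (0) _ (by push_cast; ring) (by decide)
    · exact not_dvd_of (-1) (0) (1) (1) _ (by push_cast; ring) (by decide)
    · exact not_dvd_of (-1) (1) (0) (1) _ (by push_cast; ring) (by decide)
    · exact not_dvd_of 0 (0) (0) (1) _ (by push_cast; ring) (by decide)
    · exact not_dvd_of 0 (0) (1) (1) _ (by push_cast; ring) (by decide)
    · exact not_dvd_of 0 (1) (0) (1) _ (by push_cast; ring) (by decide)
    · exact not_dvd_of 1 (0) (0) (1) _ (by push_cast; ring) (by decide)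
    · exact not_dvd_of 0 (1) (-1) (0) _ (by push_cast; ring) (by decide)
    · exact not_dvd_of 1 (0) (-1) (0) _ (by push_cast; ring) (by decide)
    · exact not_dvd_of 1 (-1) (0) (0) _ (by push_cast; ring) (by decide)
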